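/- arXiv:1412.3080 — 3 statements merged into one kernel-verified Lean document; each statement's English description precedes it below -/
import Mathlib

section
/- Let r, n, k be positive integers with k ≥ 2, n a sparsely Schemmel totient number of order r, and ω(n) ≥ k. Then Q_{k−1}(n) > λ_k(r)·(P_k(n) − r), where P_k(n) is the k-th largest prime divisor of n, Q_{k−1}(n) is the (k−1)-th smallest prime greater than r not dividing n, and λ_k(r) is the unique positive real root of (J_r/r)·x^k + k·x − (k−1). -/
/-- The Schemmel totient function of order `r` (multiplicative, with
`S r (p^a) = p^(a-1) * (p - r)`; note `p - r = 0` in `ℕ` when `p ≤ r`). -/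
def S (r n : ℕ) : ℕ := ∏ q ∈ n.primeFactors, q ^ (n.factorization q - 1) * (q - r)

/-- `b r` is the number of primes `≤ r`. -/
def b (r : ℕ) : ℕ := ((Finset.range (r + 1)).filter Nat.Prime).card

/-- `p i` is the `i`-th prime (`p 1 = 2`, `p 2 = 3`, ...). -/
noncomputable def p (i : ℕ) : ℕ := Nat.nth Nat.Prime (i - 1)

/-- `n` is a sparsely Schemmel totient number of order `r`. -/
def SST (r n : ℕ) : Prop := 0 < S r n ∧ ∀ m : ℕ, n < m → 0 < S r m → S r n < S r m

/-- Jacobsthal function: the smallest `a` such that every `a` consecutive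
integers contain one coprime to `N`. -/
noncomputable def J (N : ℕ) : ℕ := sInf {a : ℕ | ∀ x : ℕ, ∃ y ∈ Finset.Ico x (x + a), Nat.Coprime y N}

/-- `Pk k n` is the `k`-th largest prime divisor of `n` (or `0` if `ω(n) < k`). -/
def Pk (k n : ℕ) : ℕ := ((n.primeFactors.sort (· ≤ ·)).reverse).getD (k - 1) 0

/-- `Qk r k n` is the `k`-th smallest prime greater than `r` not dividing `n`. -/
noncomputable def Qk (r k n : ℕ) : ℕ := Nat.nth (fun q : ℕ => q.Prime ∧ r < q ∧ ¬ q ∣ n) (k - 1)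

/-- `Rn n` is `n` divided by the product of its distinct prime factors. -/
def Rn (n : ℕ) : ℕ := n / ∏ q ∈ n.primeFactors, q

/-! ### Auxiliary lemmas about `S` -/

lemma S_mul_prime (r a q : ℕ) (ha : a ≠ 0) (hq : q.Prime) :
    S r (a * q) = S r a * (if q ∣ a then q else q - r) := by
  have hq0 : q ≠ 0 := hq.ne_zero
  unfold S
  rw [Nat.primeFactors_mul ha hq0, hq.primeFactors,
    Nat.factorization_mul ha hq0, hq.factorization]
  by_cases hd : q ∣ a
  · have hmem : q ∈ a.primeFactors := Nat.mem_primeFactors.mpr ⟨hq, hd, ha⟩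
    have hu : a.primeFactors ∪ {q} = a.primeFactors := by
      rw [Finset.union_eq_left]; simpa using hmem
    rw [hu, if_pos hd, ← Finset.mul_prod_erase _ _ hmem,
      ← Finset.mul_prod_erase _ (fun q' => q' ^ (a.factorization q' - 1) * (q' - r)) hmem]
    have hpos : 1 ≤ a.factorization q := (Nat.Prime.factorization_pos_of_dvd hq ha hd)
    have h1 : ((a.factorization + Finsupp.single q 1 : ℕ →₀ ℕ) q) - 1 = a.factorization q := by
      simp
    rw [h1]
    have h2 : q ^ (a.factorization q - 1) * q = q ^ a.factorization q := by
      rw [← pow_succ, Nat.sub_add_cancel hpos]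
    rw [← h2]
    have h3 : ∀ x ∈ a.primeFactors.erase q,
        x ^ (((a.factorization + Finsupp.single q 1 : ℕ →₀ ℕ) x) - 1) * (x - r)
          = x ^ (a.factorization x - 1) * (x - r) := by
      intro x hx
      have hne : x ≠ q := Finset.ne_of_mem_erase hx
      simp [Finsupp.single_apply, hne.symm]
    rw [Finset.prod_congr rfl h3]
    ring
  · have hnm : q ∉ a.primeFactors := fun hc => hd (Nat.dvd_of_mem_primeFactors hc)
    have hu : a.primeFactors ∪ {q} = insert q a.primeFactors := by
      rw [Finset.union_comm]; rfl
    rw [hu, if_neg hd, Finset.prod_insert hnm]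
    have h0 : a.factorization q = 0 := Nat.factorization_eq_zero_of_not_dvd hd
    have h1 : ((a.factorization + Finsupp.single q 1 : ℕ →₀ ℕ) q) - 1 = 0 := by simp [h0]
    rw [h1, pow_zero, one_mul]
    have h3 : ∀ x ∈ a.primeFactors,
        x ^ (((a.factorization + Finsupp.single q 1 : ℕ →₀ ℕ) x) - 1) * (x - r)
          = x ^ (a.factorization x - 1) * (x - r) := by
      intro x hx
      have hne : x ≠ q := fun hc => hnm (hc ▸ hx)
      simp [Finsupp.single_apply, hne.symm]
    rw [Finset.prod_congr rfl h3]
    ring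

lemma S_mul_prime_le (r a q : ℕ) (ha : a ≠ 0) (hq : q.Prime) :
    S r (a * q) ≤ q * S r a := by
  rw [S_mul_prime r a q ha hq]
  split
  · rw [mul_comm]
  · exact le_trans (Nat.mul_le_mul_left _ (Nat.sub_le q r)) (le_of_eq (mul_comm _ _))

lemma S_mul_prime_ge (r a q : ℕ) (ha : a ≠ 0) (hq : q.Prime) :
    (q - r) * S r a ≤ S r (a * q) := by
  rw [S_mul_prime r a q ha hq]
  split
  · exact Nat.mul_le_mul_right _ (Nat.sub_le q r) |>.trans (le_of_eq (mul_comm _ _))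
  · rw [mul_comm]

lemma S_mul_prime_eq (r a q : ℕ) (ha : a ≠ 0) (hq : q.Prime) (hnd : ¬ q ∣ a) :
    S r (a * q) = (q - r) * S r a := by
  rw [S_mul_prime r a q ha hq, if_neg hnd, mul_comm]

lemma S_mul_le (r : ℕ) : ∀ v, 0 < v → ∀ a, a ≠ 0 → S r (a * v) ≤ v * S r a := by
  intro v
  induction v using Nat.strong_induction_on with
  | _ v ih =>
    intro hv a ha
    rcases eq_or_lt_of_le (show 1 ≤ v from hv) with h1 | h2
    · simp [← h1]
    · have hv1 : v ≠ 1 := by omega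
      set q := v.minFac with hqdef
      have hq : q.Prime := Nat.minFac_prime hv1
      have hqd : q ∣ v := Nat.minFac_dvd v
      have hq2 : 2 ≤ q := hq.two_le
      have hv' : v / q < v := Nat.div_lt_self hv (by omega)
      have hv'0 : 0 < v / q := Nat.div_pos (Nat.le_of_dvd hv hqd) (by omega)
      have hsplit : a * v = (a * (v / q)) * q := by
        rw [mul_assoc, Nat.div_mul_cancel hqd]
      calc S r (a * v) = S r ((a * (v / q)) * q) := by rw [hsplit]
        _ ≤ q * S r (a * (v / q)) :=
            S_mul_prime_le r _ q (by positivity) hq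
        _ ≤ q * ((v / q) * S r a) :=
            Nat.mul_le_mul_left _ (ih (v / q) hv' hv'0 a ha)
        _ = (q * (v / q)) * S r a := by ring
        _ = v * S r a := by rw [Nat.mul_div_cancel' hqd]

lemma S_mul_prod_ge (r : ℕ) (T : Finset ℕ) (hT : ∀ q ∈ T, q.Prime) (a : ℕ) (ha : a ≠ 0) :
    (∏ q ∈ T, (q - r)) * S r a ≤ S r (a * ∏ q ∈ T, q) := by
  induction T using Finset.induction_on generalizing a with
  | empty => simp
  | @insert x s hx ihs =>
    have hxp : x.Prime := hT x (Finset.mem_insert_self x s)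
    have hsp : ∀ q ∈ s, q.Prime := fun q hq => hT q (Finset.mem_insert_of_mem hq)
    rw [Finset.prod_insert hx, Finset.prod_insert hx]
    have h1 : a * (x * ∏ q ∈ s, q) = (a * x) * ∏ q ∈ s, q := by ring
    rw [h1]
    calc ((x - r) * ∏ q ∈ s, (q - r)) * S r a
        = (∏ q ∈ s, (q - r)) * ((x - r) * S r a) := by ring
      _ ≤ (∏ q ∈ s, (q - r)) * S r (a * x) :=
          Nat.mul_le_mul_left _ (S_mul_prime_ge r a x ha hxp)
      _ ≤ S r ((a * x) * ∏ q ∈ s, q) := ihs hsp (a * x) (Nat.mul_ne_zero ha hxp.ne_zero)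

lemma S_mul_prod_eq (r : ℕ) (T : Finset ℕ) (a : ℕ) (ha : a ≠ 0)
    (hT : ∀ q ∈ T, q.Prime ∧ ¬ q ∣ a) :
    S r (a * ∏ q ∈ T, q) = (∏ q ∈ T, (q - r)) * S r a := by
  induction T using Finset.induction_on generalizing a with
  | empty => simp
  | @insert x s hx ihs =>
    have hxp : x.Prime := (hT x (Finset.mem_insert_self x s)).1
    have hxnd : ¬ x ∣ a := (hT x (Finset.mem_insert_self x s)).2
    rw [Finset.prod_insert hx, Finset.prod_insert hx]
    have h1 : a * (x * ∏ q ∈ s, q) = (a * x) * ∏ q ∈ s, q := by ring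
    rw [h1]
    have hax : a * x ≠ 0 := Nat.mul_ne_zero ha hxp.ne_zero
    rw [ihs (a*x) hax, S_mul_prime_eq r a x ha hxp hxnd]
    · ring
    · intro q hq
      have hqp := (hT q (Finset.mem_insert_of_mem hq)).1
      refine ⟨hqp, ?_⟩
      intro hdvd
      rcases (Nat.Prime.dvd_mul hqp).mp hdvd with h | h
      · exact (hT q (Finset.mem_insert_of_mem hq)).2 h
      · have : q = x := (Nat.prime_dvd_prime_iff_eq hqp hxp).mp h
        exact hx (this ▸ hq)

lemma S_pos_of (r m : ℕ) (hm : ∀ q ∈ m.primeFactors, r < q) : 0 < S r m := by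
  unfold S
  apply Finset.prod_pos
  intro q hq
  have hqp : q.Prime := Nat.prime_of_mem_primeFactors hq
  have : 0 < q - r := by have := hm q hq; omega
  exact Nat.mul_pos (pow_pos hqp.pos _) this

lemma primeFactors_gt_of_S_pos (r m : ℕ) (hS : 0 < S r m) :
    ∀ q ∈ m.primeFactors, r < q := by
  intro q hq
  by_contra hc
  have h0 : q ^ (m.factorization q - 1) * (q - r) = 0 := by
    have : q - r = 0 := by omega
    simp [this]
  have : S r m = 0 := by unfold S; exact Finset.prod_eq_zero hq h0
  omega

/-! ### Top-`k` prime divisors -/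

lemma topk (n k : ℕ) (hk : 1 ≤ k) (hc : k ≤ n.primeFactors.card) :
    Pk k n ∈ n.primeFactors ∧
      (n.primeFactors.filter (fun q => Pk k n ≤ q)).card = k := by
  classical
  set F := n.primeFactors with hF
  set l := F.sort (· ≤ ·) with hl
  have hlen : l.length = F.card := Finset.length_sort _
  have hck : k ≤ l.length := by omega
  have hrevlen : k - 1 < l.reverse.length := by
    rw [List.length_reverse]; omega
  have hidx : l.length - 1 - (k - 1) = l.length - k := by omega
  have hik : l.length - k < l.length := by omega
  have hPk : Pk k n = l[l.length - k] := by
    unfold Pk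
    rw [← hl, List.getD_eq_getElem _ _ hrevlen, List.getElem_reverse]
    congr 1
  have hsorted : List.Pairwise (· < ·) l := (Finset.sortedLT_sort F).pairwise
  have hpair := List.pairwise_iff_getElem.mp hsorted
  have hmem : Pk k n ∈ F := by
    rw [hPk, ← Finset.mem_sort (· ≤ ·)]
    exact List.getElem_mem _
  refine ⟨hmem, ?_⟩
  have hfilterlist : l.filter (fun q => Pk k n ≤ q) = l.drop (l.length - k) := by
    conv_lhs => rw [← List.take_append_drop (l.length - k) l]
    rw [List.filter_append]
    have h1 : (l.take (l.length - k)).filter (fun q => Pk k n ≤ q) = [] := by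
      rw [List.filter_eq_nil_iff]
      intro a ha
      obtain ⟨i, hi, hgi⟩ := List.mem_iff_getElem.mp ha
      have hi' : i < l.length - k := by
        have := hi; rw [List.length_take] at this; omega
      have hal : a = l[i]'(by omega) := by
        rw [← hgi, List.getElem_take]
      have hlt : l[i]'(by omega) < l[l.length - k] := hpair i (l.length - k) (by omega) hik hi'
      simp only [decide_eq_true_eq, hal, hPk]
      omega
    have h2 : (l.drop (l.length - k)).filter (fun q => Pk k n ≤ q)
        = l.drop (l.length - k) := by
      rw [List.filter_eq_self]
      intro a ha
      obtain ⟨i, hi, hgi⟩ := List.mem_iff_getElem.mp ha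
      have hdl : (l.drop (l.length - k)).length = k := by
        rw [List.length_drop]; omega
      have hgd : (l.drop (l.length - k))[i] = l[l.length - k + i] := List.getElem_drop
      simp only [decide_eq_true_eq]
      rw [← hgi, hgd, hPk]
      rcases Nat.eq_zero_or_pos i with h0 | hpos
      · subst h0; simp
      · have : l[l.length - k] < l[l.length - k + i] := by
          apply hpair
          omega
        omega
    rw [h1, h2, List.nil_append]
  have hcardeq : (F.filter (fun q => Pk k n ≤ q)).card
      = (l.filter (fun q => Pk k n ≤ q)).length := by
    have h1 : (F.filter (fun q => Pk k n ≤ q)).val = F.val.filter (fun q => Pk k n ≤ q) :=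
      Finset.filter_val _ _
    have h2 : (F.filter (fun q => Pk k n ≤ q)).card
        = Multiset.card (F.val.filter (fun q => Pk k n ≤ q)) := by
      rw [Finset.card, h1]
    rw [h2, ← Finset.sort_eq F (· ≤ ·), ← hl, Multiset.filter_coe, Multiset.coe_card]
  rw [hcardeq, hfilterlist, List.length_drop]
  omega

/-! ### Jacobsthal function facts -/

lemma jacobsthal_facts (N : ℕ) (hN : 0 < N) :
    0 < J N ∧ ∀ x : ℕ, ∃ y ∈ Finset.Ico x (x + J N), Nat.Coprime y N := by
  have hmemN : N ∈ {a : ℕ | ∀ x : ℕ, ∃ y ∈ Finset.Ico x (x + a), Nat.Coprime y N} := by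
    intro x
    set c := (N + 1 - x % N) % N with hc
    have hxN : x % N < N := Nat.mod_lt x hN
    refine ⟨x + c, ?_, ?_⟩
    · rw [Finset.mem_Ico]
      have : c < N := Nat.mod_lt _ hN
      exact ⟨Nat.le_add_right _ _, by omega⟩
    · have hmod : (x + c) % N = 1 % N := by
        have h1 : x + c ≡ x % N + (N + 1 - x % N) [MOD N] :=
          Nat.ModEq.add (Nat.mod_modEq x N).symm (Nat.mod_modEq _ N)
        have h2 : x % N + (N + 1 - x % N) = N + 1 := by omega
        have h3 : (N + 1) % N = 1 % N := Nat.add_mod_left N 1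
        calc (x + c) % N = (x % N + (N + 1 - x % N)) % N := h1
          _ = (N + 1) % N := by rw [h2]
          _ = 1 % N := h3
      rcases eq_or_lt_of_le (show 1 ≤ N from hN) with h1 | h2
      · have : N = 1 := by omega
        subst this; exact Nat.coprime_one_right _
      · have hy1 : (x + c) % N = 1 := by rw [hmod]; exact Nat.mod_eq_of_lt h2
        rw [Nat.Coprime, Nat.gcd_comm, Nat.gcd_rec, hy1]
        exact Nat.gcd_one_left N
  have hJmem : J N ∈ {a : ℕ | ∀ x : ℕ, ∃ y ∈ Finset.Ico x (x + a), Nat.Coprime y N} :=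
    Nat.sInf_mem ⟨N, hmemN⟩
  refine ⟨?_, hJmem⟩
  by_contra h0
  have hJ0 : J N = 0 := by omega
  obtain ⟨y, hy, -⟩ := hJmem 0
  rw [hJ0] at hy
  simp at hy

/-! ### The key real-analytic inequality -/

open Real Finset in
set_option maxHeartbeats 2000000 in
lemma key_ineq (k : ℕ) (hk : 2 ≤ k) (rr lam x Jr : ℝ)
    (hrr : 1 ≤ rr) (hlam : 0 < lam) (hx : 1 ≤ x) (hJr : 1 ≤ Jr)
    (hroot : (Jr / rr) * lam ^ k + k * lam - (k - 1) = 0)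
    (T TQ : Finset ℕ) (hcT : T.card = k) (hcQ : TQ.card = k - 1)
    (hT : ∀ q ∈ T, x + rr ≤ (q : ℝ))
    (hQ1 : ∀ q ∈ TQ, rr + 1 ≤ (q : ℝ))
    (hQ2 : ∀ q ∈ TQ, (q : ℝ) ≤ lam * x) :
    (∏ q ∈ T, (q : ℝ)) / (∏ q ∈ TQ, (q : ℝ)) + Jr
      ≤ (∏ q ∈ T, ((q : ℝ) - rr)) / (∏ q ∈ TQ, ((q : ℝ) - rr)) := by
  have hx0 : 0 < x := by linarith
  have hrr0 : 0 < rr := by linarith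
  have hTQne : TQ.Nonempty := Finset.card_pos.mp (by omega)
  obtain ⟨q0, hq0⟩ := hTQne
  have hlx : rr + 1 ≤ lam * x := le_trans (hQ1 q0 hq0) (hQ2 q0 hq0)
  have hlx0 : 0 < lam * x := by linarith
  have hlxrr0 : 0 < lam * x - rr := by linarith
  have hTpos : ∀ q ∈ T, (0:ℝ) < (q:ℝ) - rr := fun q hq => by
    have := hT q hq; linarith
  have hQpos : ∀ q ∈ TQ, (0:ℝ) < (q:ℝ) - rr := fun q hq => by
    have := hQ1 q hq; linarith
  have hQpos' : ∀ q ∈ TQ, (0:ℝ) < (q:ℝ) := fun q hq => by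
    have := hQ1 q hq; linarith
  set A := ∏ q ∈ T, ((q : ℝ) - rr) with hA
  set B := ∏ q ∈ TQ, ((q : ℝ) - rr) with hB
  set PT := ∏ q ∈ T, (q : ℝ) with hPT
  set C := ∏ q ∈ TQ, (q : ℝ) with hC
  have hApos : 0 < A := Finset.prod_pos hTpos
  have hBpos : 0 < B := Finset.prod_pos hQpos
  have hCpos : 0 < C := Finset.prod_pos hQpos'
  have hPTpos : 0 < PT := Finset.prod_pos (fun q hq => by have := hT q hq; linarith)
  set kk := k - 1 with hkk
  have hkkR : (kk : ℝ) = (k : ℝ) - 1 := by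
    rw [hkk]; push_cast [Nat.cast_sub (by omega : 1 ≤ k)]; ring
  set u : ℝ := rr / (lam * x) with hu
  have hu0 : 0 < u := div_pos hrr0 hlx0
  have hu1 : u < 1 := by rw [hu, div_lt_one hlx0]; linarith
  set t : ℝ := (kk : ℝ) * u - k * (rr / x) with ht
  have hpowk : lam ^ k = lam ^ kk * lam := by
    rw [← pow_succ]; congr 1; omega
  have hrooteq : rr * ((k:ℝ) - 1 - k * lam) = Jr * lam ^ k := by
    have h2 : ((k:ℝ) - 1) - k*lam = (Jr/rr) * lam^k := by linarith
    rw [h2]; field_simp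
  have hkey : (kk:ℝ)*rr - k*rr*lam = Jr * lam ^ kk * lam := by
    rw [hkkR]; linear_combination hrooteq + Jr * hpowk
  have htJ : t = Jr * lam ^ kk / x := by
    rw [ht, hu]
    field_simp
    linear_combination hkey
  have ht0 : 0 < t := by
    rw [htJ]; positivity
  have hstep1 : PT ≤ A * Real.exp (rr / x) ^ k := by
    have hptw : ∀ q ∈ T, (q:ℝ) ≤ ((q:ℝ) - rr) * Real.exp (rr / x) := by
      intro q hq
      have h1 : x ≤ (q:ℝ) - rr := by have := hT q hq; linarith
      have hqr0 : (0:ℝ) < (q:ℝ) - rr := by linarith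
      have h2 : 1 + rr/x ≤ Real.exp (rr/x) := by
        have := Real.add_one_le_exp (rr/x); linarith
      have h3 : rr/((q:ℝ)-rr) ≤ rr/x := by
        apply div_le_div_of_nonneg_left hrr0.le hx0 h1
      have h4 : (q:ℝ) = ((q:ℝ)-rr)*(1 + rr/((q:ℝ)-rr)) := by field_simp; ring
      calc (q:ℝ) = ((q:ℝ)-rr)*(1 + rr/((q:ℝ)-rr)) := h4
        _ ≤ ((q:ℝ)-rr)*(1 + rr/x) := by nlinarith
        _ ≤ ((q:ℝ)-rr)*Real.exp (rr/x) := by nlinarith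
    calc PT ≤ ∏ q ∈ T, (((q:ℝ) - rr) * Real.exp (rr/x)) := by
          rw [hPT]
          exact Finset.prod_le_prod (fun q hq => by positivity) hptw
      _ = A * Real.exp (rr/x) ^ k := by
          rw [Finset.prod_mul_distrib, Finset.prod_const, hcT, hA]
  have hstep2 : B ≤ C * Real.exp (-(rr/(lam*x))) ^ kk := by
    have hqw : ∀ q ∈ TQ, (q:ℝ) - rr ≤ (q:ℝ) * Real.exp (-(rr/(lam*x))) := by
      intro q hq
      have hq0' : (0:ℝ) < q := hQpos' q hq
      have hqle : (q:ℝ) ≤ lam * x := hQ2 q hq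
      have h1 : 1 - rr/(q:ℝ) ≤ Real.exp (-(rr/(q:ℝ))) := by
        have := Real.add_one_le_exp (-(rr/(q:ℝ))); linarith
      have h2 : Real.exp (-(rr/(q:ℝ))) ≤ Real.exp (-(rr/(lam*x))) := by
        apply Real.exp_le_exp.mpr
        have : rr/(lam*x) ≤ rr/(q:ℝ) := div_le_div_of_nonneg_left hrr0.le hq0' hqle
        linarith
      have h4 : (q:ℝ) - rr = (q:ℝ)*(1 - rr/(q:ℝ)) := by field_simp
      calc (q:ℝ) - rr = (q:ℝ)*(1 - rr/(q:ℝ)) := h4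
        _ ≤ (q:ℝ)*Real.exp (-(rr/(q:ℝ))) := by nlinarith
        _ ≤ (q:ℝ)*Real.exp (-(rr/(lam*x))) := by nlinarith
    calc B ≤ ∏ q ∈ TQ, ((q:ℝ) * Real.exp (-(rr/(lam*x)))) := by
          rw [hB]
          exact Finset.prod_le_prod (fun q hq => (hQpos q hq).le) hqw
      _ = C * Real.exp (-(rr/(lam*x))) ^ kk := by
          rw [Finset.prod_mul_distrib, Finset.prod_const, hcQ, hC]
  have hexpprod : Real.exp (rr/x) ^ k * Real.exp (-(rr/(lam*x))) ^ kk = Real.exp (-t) := by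
    rw [← Real.exp_nat_mul, ← Real.exp_nat_mul, ← Real.exp_add]
    congr 1
    rw [ht, hkkR, hu]
    ring
  have hstep4 : PT / C ≤ (A/B) * Real.exp (-t) := by
    rw [div_le_iff₀ hCpos, div_mul_eq_mul_div, div_mul_eq_mul_div, le_div_iff₀ hBpos]
    calc PT * B ≤ (A * Real.exp (rr/x) ^ k) * (C * Real.exp (-(rr/(lam*x))) ^ kk) := by
          apply mul_le_mul hstep1 hstep2 hBpos.le (by positivity)
      _ = A * (Real.exp (rr/x) ^ k * Real.exp (-(rr/(lam*x))) ^ kk) * C := by ring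
      _ = A * Real.exp (-t) * C := by rw [hexpprod]
  have hAx : x^k ≤ A := by
    calc x^k = ∏ _q ∈ T, x := by rw [Finset.prod_const, hcT]
      _ ≤ A := by
          rw [hA]
          exact Finset.prod_le_prod (fun q hq => hx0.le)
            (fun q hq => by have := hT q hq; linarith)
  have hBD : B ≤ (lam*x - rr)^kk := by
    calc B ≤ ∏ _q ∈ TQ, (lam*x - rr) := by
          rw [hB]
          exact Finset.prod_le_prod (fun q hq => (hQpos q hq).le)
            (fun q hq => by have := hQ2 q hq; linarith)
      _ = (lam*x-rr)^kk := by rw [Finset.prod_const, hcQ]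
  have hU0 : x^k/(lam*x-rr)^kk ≤ A / B := by
    apply div_le_div₀ hApos.le hAx hBpos hBD
  have hbase : Real.exp u / lam ≤ x / (lam*x - rr) := by
    rw [div_le_div_iff₀ hlam hlxrr0]
    have h1m : lam*x - rr = (lam*x) * (1 - u) := by
      rw [hu]; field_simp
    have he : Real.exp u * (1-u) ≤ 1 := by
      have h2 : 1 - u ≤ Real.exp (-u) := by
        have := Real.add_one_le_exp (-u); linarith
      calc Real.exp u * (1-u) ≤ Real.exp u * Real.exp (-u) := by
            nlinarith [Real.exp_pos u]
        _ = 1 := by rw [← Real.exp_add]; simp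
    calc Real.exp u * (lam*x - rr) = (lam*x) * (Real.exp u * (1-u)) := by
          rw [h1m]; ring
      _ ≤ (lam*x) * 1 := by nlinarith
      _ = x * lam := by ring
  have hstep6 : x / lam^kk * Real.exp t ≤ A / B := by
    have htu : t ≤ (kk:ℝ) * u := by
      rw [ht]
      have : 0 ≤ (k:ℝ) * (rr/x) := by positivity
      linarith
    have hexp1 : Real.exp t ≤ Real.exp u ^ kk := by
      rw [← Real.exp_nat_mul]
      exact Real.exp_le_exp.mpr htu
    have hpb : (Real.exp u / lam)^kk ≤ (x/(lam*x-rr))^kk :=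
      pow_le_pow_left₀ (by positivity) hbase kk
    have hxk : x ^ k = x * x ^ kk := by
      rw [← pow_succ']; congr 1; omega
    calc x / lam^kk * Real.exp t ≤ x / lam^kk * Real.exp u ^ kk := by
          apply mul_le_mul_of_nonneg_left hexp1 (by positivity)
      _ = x * (Real.exp u / lam)^kk := by
          rw [div_pow]; ring
      _ ≤ x * (x/(lam*x-rr))^kk := by
          nlinarith [pow_nonneg (by positivity : (0:ℝ) ≤ Real.exp u / lam) kk]
      _ = x^k / (lam*x-rr)^kk := by
          rw [div_pow, hxk]; ring
      _ ≤ A / B := hU0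
  have hgap : Jr ≤ (A/B) * (1 - Real.exp (-t)) := by
    have h1e : 0 ≤ 1 - Real.exp (-t) := by
      have : Real.exp (-t) ≤ 1 := Real.exp_le_one_iff.mpr (by linarith)
      linarith
    have hJrt : Jr = (x / lam^kk) * t := by
      rw [htJ]; field_simp
    calc Jr = (x / lam^kk) * t := hJrt
      _ ≤ (x / lam^kk) * (Real.exp t - 1) := by
          have h5 := Real.add_one_le_exp t
          have hxl : 0 ≤ x / lam^kk := by positivity
          exact mul_le_mul_of_nonneg_left (by linarith) hxl
      _ = (x / lam^kk * Real.exp t) * (1 - Real.exp (-t)) := by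
          rw [Real.exp_neg]
          have := Real.exp_ne_zero t
          field_simp
      _ ≤ (A/B) * (1 - Real.exp (-t)) := by
          apply mul_le_mul_of_nonneg_right hstep6 h1e
  calc PT / C + Jr ≤ (A/B) * Real.exp (-t) + (A/B)*(1 - Real.exp (-t)) := by
        exact add_le_add hstep4 hgap
    _ = A / B := by ring

theorem stmt13 (r n k : ℕ) (hr : 0 < r) (hk : 2 ≤ k) (h : SST r n)
    (hω : k ≤ n.primeFactors.card) (lam : ℝ) (hlam : 0 < lam)
    (hroot : ((J (primorial r) : ℝ) / r) * lam ^ k + k * lam - (k - 1) = 0) :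
    lam * ((Pk k n : ℝ) - r) < (Qk r (k - 1) n : ℝ) := by
  classical
  by_contra hcon
  push_neg at hcon
  -- basic facts
  have hn0 : n ≠ 0 := by
    intro h0
    rw [h0] at hω
    simp at hω
    omega
  have hrlt : ∀ q ∈ n.primeFactors, r < q := primeFactors_gt_of_S_pos r n h.1
  obtain ⟨hmemPk, hcardT⟩ := topk n k (by omega) hω
  set T := n.primeFactors.filter (fun q => Pk k n ≤ q) with hTdef
  have hTsub : T ⊆ n.primeFactors := Finset.filter_subset _ _
  have hprimesT : ∀ q ∈ T, q.Prime := fun q hq => Nat.prime_of_mem_primeFactors (hTsub hq)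
  have hpk_r : r < Pk k n := hrlt _ hmemPk
  -- the predicate for Qk and its infinitude
  set pred := (fun q : ℕ => q.Prime ∧ r < q ∧ ¬ q ∣ n) with hpreddef
  have hinf : (setOf pred).Infinite := by
    have hfin : ({q : ℕ | q ≤ r} ∪ ↑n.primeFactors : Set ℕ).Finite :=
      (Set.finite_Iic r).union n.primeFactors.finite_toSet
    have hsub : {q : ℕ | q.Prime} \ ({q : ℕ | q ≤ r} ∪ ↑n.primeFactors) ⊆ setOf pred := by
      rintro q ⟨hq, hnot⟩
      simp only [Set.mem_union, Set.mem_setOf_eq, Finset.mem_coe, not_or] at hnot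
      obtain ⟨h1, h2⟩ := hnot
      refine ⟨hq, by omega, ?_⟩
      intro hdvd
      exact h2 (Nat.mem_primeFactors.mpr ⟨hq, hdvd, hn0⟩)
    exact ((Nat.infinite_setOf_prime).diff hfin).mono hsub
  have hQmem : ∀ j, pred (Nat.nth pred j) := Nat.nth_mem_of_infinite hinf
  have hQkval : Qk r (k-1) n = Nat.nth pred (k-2) := by
    unfold Qk
    rw [← hpreddef]
    congr 1
  set TQ := (Finset.range (k-1)).image (Nat.nth pred) with hTQdef
  have hQinj : Function.Injective (Nat.nth pred) := (Nat.nth_strictMono hinf).injective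
  have hcardTQ : TQ.card = k - 1 := by
    rw [hTQdef, Finset.card_image_of_injective _ hQinj, Finset.card_range]
  have hTQfacts : ∀ q ∈ TQ, pred q ∧ q ≤ Nat.nth pred (k-2) := by
    intro q hq
    rw [hTQdef] at hq
    obtain ⟨j, hj, rfl⟩ := Finset.mem_image.mp hq
    have hjlt : j < k-1 := Finset.mem_range.mp hj
    exact ⟨hQmem j, (Nat.nth_le_nth hinf).mpr (by omega)⟩
  -- Jacobsthal facts
  obtain ⟨hJpos, hJprop⟩ := jacobsthal_facts (primorial r) (primorial_pos r)
  -- real setup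
  set x : ℝ := (Pk k n : ℝ) - r with hxdef
  have hx1 : (1:ℝ) ≤ x := by
    rw [hxdef]
    have : (r:ℝ) + 1 ≤ (Pk k n : ℝ) := by exact_mod_cast hpk_r
    linarith
  have hQle : (Nat.nth pred (k-2) : ℝ) ≤ lam * x := by
    rw [← hQkval, hxdef]
    exact hcon
  have hT' : ∀ q ∈ T, x + r ≤ (q:ℝ) := by
    intro q hq
    have h1 : Pk k n ≤ q := (Finset.mem_filter.mp hq).2
    have h2 : (Pk k n : ℝ) ≤ q := by exact_mod_cast h1
    rw [hxdef]; linarith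
  have hQ1' : ∀ q ∈ TQ, (r:ℝ) + 1 ≤ (q:ℝ) := by
    intro q hq
    have := (hTQfacts q hq).1.2.1
    exact_mod_cast this
  have hQ2' : ∀ q ∈ TQ, (q:ℝ) ≤ lam * x := by
    intro q hq
    have h1 : q ≤ Nat.nth pred (k-2) := (hTQfacts q hq).2
    have h2 : (q:ℝ) ≤ (Nat.nth pred (k-2) : ℝ) := by exact_mod_cast h1
    linarith [hQle]
  have key := key_ineq k hk (r:ℝ) lam x (J (primorial r) : ℝ)
    (by exact_mod_cast hr) hlam hx1 (by exact_mod_cast hJpos) hroot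
    T TQ hcardT hcardTQ hT' hQ1' hQ2'
  -- natural-number products and casts
  set PTn := ∏ q ∈ T, q with hPTndef
  set Cn := ∏ q ∈ TQ, q with hCndef
  set An := ∏ q ∈ T, (q - r) with hAndef
  set Bn := ∏ q ∈ TQ, (q - r) with hBndef
  have hcastPT : ((PTn:ℕ):ℝ) = ∏ q ∈ T, (q:ℝ) := by rw [hPTndef, Nat.cast_prod]
  have hcastC : ((Cn:ℕ):ℝ) = ∏ q ∈ TQ, (q:ℝ) := by rw [hCndef, Nat.cast_prod]
  have hcastA : ((An:ℕ):ℝ) = ∏ q ∈ T, ((q:ℝ) - r) := by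
    rw [hAndef, Nat.cast_prod]
    apply Finset.prod_congr rfl
    intro q hq
    rw [Nat.cast_sub (le_of_lt (hrlt q (hTsub hq)))]
  have hcastB : ((Bn:ℕ):ℝ) = ∏ q ∈ TQ, ((q:ℝ) - r) := by
    rw [hBndef, Nat.cast_prod]
    apply Finset.prod_congr rfl
    intro q hq
    rw [Nat.cast_sub (le_of_lt (hTQfacts q hq).1.2.1)]
  rw [← hcastPT, ← hcastC, ← hcastA, ← hcastB] at key
  have hBn0 : 0 < Bn := by
    rw [hBndef]
    apply Finset.prod_pos
    intro q hq
    have := (hTQfacts q hq).1.2.1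
    omega
  have hCn0 : 0 < Cn := by
    rw [hCndef]
    apply Finset.prod_pos
    intro q hq
    exact (hTQfacts q hq).1.1.pos
  have hBn0R : (0:ℝ) < (Bn:ℝ) := by exact_mod_cast hBn0
  have hCn0R : (0:ℝ) < (Cn:ℝ) := by exact_mod_cast hCn0
  -- choose v via Jacobsthal
  set L : ℝ := (PTn:ℝ)/(Cn:ℝ) with hLdef
  have hL0 : 0 ≤ L := by positivity
  obtain ⟨v, hvmem, hvcop⟩ := hJprop (Nat.floor L + 1)
  rw [Finset.mem_Ico] at hvmem
  have hv1 : Nat.floor L + 1 ≤ v := hvmem.1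
  have hv2 : v < Nat.floor L + 1 + J (primorial r) := hvmem.2
  have hvL : L < (v:ℝ) := by
    have h1 : L < (Nat.floor L : ℝ) + 1 := Nat.lt_floor_add_one L
    have h2 : ((Nat.floor L + 1 : ℕ) : ℝ) ≤ (v:ℝ) := by exact_mod_cast hv1
    push_cast at h2
    linarith
  have hvU : (v:ℝ) ≤ (An:ℝ)/(Bn:ℝ) := by
    have h0 : v ≤ Nat.floor L + J (primorial r) := by omega
    have h1 : (v:ℝ) ≤ (Nat.floor L : ℝ) + (J (primorial r) : ℝ) := by exact_mod_cast h0
    have h2 : (Nat.floor L : ℝ) ≤ L := Nat.floor_le hL0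
    have h3 : L + (J (primorial r) : ℝ) ≤ (An:ℝ)/(Bn:ℝ) := key
    linarith
  -- natural-number inequalities
  have hgtN : PTn < Cn * v := by
    have h1 : (PTn:ℝ) < (v:ℝ) * (Cn:ℝ) := by
      rw [hLdef] at hvL
      exact (div_lt_iff₀ hCn0R).mp hvL
    have h2 : (PTn:ℝ) < ((Cn * v : ℕ) : ℝ) := by push_cast; linarith
    exact_mod_cast h2
  have hleN : v * Bn ≤ An := by
    have h1 : (v:ℝ) * (Bn:ℝ) ≤ (An:ℝ) := (le_div_iff₀ hBn0R).mp hvU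
    exact_mod_cast h1
  -- construct m
  have hdvdPT : PTn ∣ n :=
    dvd_trans (Finset.prod_dvd_prod_of_subset _ _ _ hTsub) (Nat.prod_primeFactors_dvd n)
  set n0 := n / PTn with hn0def
  have hneq : n = n0 * PTn := (Nat.div_mul_cancel hdvdPT).symm
  have hn00 : n0 ≠ 0 := by
    intro hz
    rw [hz, zero_mul] at hneq
    exact hn0 hneq
  have hn0dvd : n0 ∣ n := Nat.div_dvd_of_dvd hdvdPT
  have hv0 : 0 < v := by omega
  set m := (n0 * Cn) * v with hmdef
  have hnm : n < m := by
    rw [hmdef, hneq, mul_assoc]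
    have := Nat.pos_of_ne_zero hn00
    exact mul_lt_mul_of_pos_left hgtN this
  -- S estimates
  have hSn_low : An * S r n0 ≤ S r n := by
    conv_rhs => rw [hneq]
    rw [hPTndef, hAndef]
    exact S_mul_prod_ge r T hprimesT n0 hn00
  have hTQnotdvd : ∀ q ∈ TQ, q.Prime ∧ ¬ q ∣ n0 := by
    intro q hq
    obtain ⟨hp, -⟩ := hTQfacts q hq
    exact ⟨hp.1, fun hd => hp.2.2 (hd.trans hn0dvd)⟩
  have hSmid : S r (n0 * Cn) = Bn * S r n0 := by
    rw [hCndef, hBndef]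
    exact S_mul_prod_eq r TQ n0 hn00 hTQnotdvd
  have hn0Cn0 : n0 * Cn ≠ 0 := Nat.mul_ne_zero hn00 (by omega)
  have hSm_up : S r m ≤ S r n := by
    calc S r m ≤ v * S r (n0*Cn) := S_mul_le r v hv0 (n0*Cn) hn0Cn0
      _ = v * (Bn * S r n0) := by rw [hSmid]
      _ = (v * Bn) * S r n0 := by ring
      _ ≤ An * S r n0 := Nat.mul_le_mul_right _ hleN
      _ ≤ S r n := hSn_low
  -- positivity of S r m
  have hSm_pos : 0 < S r m := by
    apply S_pos_of
    intro q hq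
    have hqp : q.Prime := Nat.prime_of_mem_primeFactors hq
    have hqd : q ∣ m := Nat.dvd_of_mem_primeFactors hq
    rw [hmdef] at hqd
    rcases (Nat.Prime.dvd_mul hqp).mp hqd with hqd1 | hqdv
    · rcases (Nat.Prime.dvd_mul hqp).mp hqd1 with hqn0 | hqC
      · exact hrlt q (Nat.mem_primeFactors.mpr ⟨hqp, hqn0.trans hn0dvd, hn0⟩)
      · rw [hCndef] at hqC
        obtain ⟨q', hq', hdq'⟩ := hqp.prime.exists_mem_finset_dvd hqC
        have : q = q' := (Nat.prime_dvd_prime_iff_eq hqp ((hTQfacts q' hq').1.1)).mp hdq'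
        rw [this]
        exact (hTQfacts q' hq').1.2.1
    · by_contra hle
      have hqprimor : q ∣ primorial r := by
        unfold primorial
        apply Finset.dvd_prod_of_mem
        rw [Finset.mem_filter, Finset.mem_range]
        exact ⟨by omega, hqp⟩
      have hgcd : q ∣ Nat.gcd v (primorial r) := Nat.dvd_gcd hqdv hqprimor
      rw [hvcop] at hgcd
      exact hqp.one_lt.ne' (Nat.dvd_one.mp hgcd)
  -- contradiction with SST
  have hfinal := h.2 m hnm hSm_pos
  omega
end

section
/- Let r be a positive integer and n ∈ B_r with n > 1, and let η(n) be the exponent of the largest prime divisor P_1(n) in the factorization of n. If n is a sparsely Schemmel totient number of order r, then P_1(n)^(η(n)−1) < 4·(J_r/r)·P_1(n)^2; in particular, if P_1(n)^4 | n then P_1(n) < 4·J_r/r. -/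
lemma J_spec (N : ℕ) (hN : 0 < N) (x : ℕ) :
    ∃ y ∈ Finset.Ico x (x + J N), Nat.Coprime y N := by
  have hmem : (2*N+1) ∈ {a : ℕ | ∀ x : ℕ, ∃ y ∈ Finset.Ico x (x + a), Nat.Coprime y N} := by
    intro x
    refine ⟨N*(x/N+1)+1, ?_, ?_⟩
    · have h1 : N * (x/N) + x % N = x := Nat.div_add_mod x N
      have h2 : x % N < N := Nat.mod_lt x hN
      have h3 : N*(x/N+1)+1 = N*(x/N) + N + 1 := by ring
      simp only [Finset.mem_Ico]
      omega
    · have : Nat.Coprime (1 + N * (x/N+1)) N := by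
        rw [Nat.coprime_add_mul_left_left]
        exact Nat.coprime_one_left N
      simpa [Nat.add_comm] using this
  have hne : {a : ℕ | ∀ x : ℕ, ∃ y ∈ Finset.Ico x (x + a), Nat.Coprime y N}.Nonempty := ⟨_, hmem⟩
  exact Nat.sInf_mem hne x

lemma S_pos_of_s17 (r n : ℕ) (h : ∀ p ∈ n.primeFactors, r < p) : 0 < S r n :=
  Finset.prod_pos fun q hq => Nat.mul_pos
    (Nat.pow_pos (Nat.prime_of_mem_primeFactors hq).pos)
    (by have := h q hq; omega)

lemma primes_gt_of_S_pos (r n : ℕ) (h : 0 < S r n) : ∀ p ∈ n.primeFactors, r < p := by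
  intro p hp
  by_contra hle
  push_neg at hle
  have : S r n = 0 := Finset.prod_eq_zero hp (by
    have : p - r = 0 := Nat.sub_eq_zero_of_le hle
    simp [this])
  omega

lemma S_eq (r n : ℕ) :
    S r n = (∏ q ∈ n.primeFactors, q ^ (n.factorization q - 1)) *
      ∏ q ∈ n.primeFactors, (q - r) := by
  rw [S, ← Finset.prod_mul_distrib]

lemma n_eq_R_mul_rad (n : ℕ) (hn : n ≠ 0) :
    n = (∏ q ∈ n.primeFactors, q ^ (n.factorization q - 1)) * ∏ q ∈ n.primeFactors, q := by
  conv_lhs => rw [← Nat.factorization_prod_pow_eq_self hn]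
  rw [Finsupp.prod, Nat.support_factorization, ← Finset.prod_mul_distrib]
  refine Finset.prod_congr rfl fun q hq => ?_
  have h1 : n.factorization q ≠ 0 := by
    rwa [← Finsupp.mem_support_iff, Nat.support_factorization]
  rw [← pow_succ]
  congr 1
  omega

lemma Pk1_mem (n : ℕ) (hn : 1 < n) :
    Pk 1 n ∈ n.primeFactors ∧ ∀ q ∈ n.primeFactors, q ≤ Pk 1 n := by
  have hne : n.primeFactors.Nonempty := Nat.nonempty_primeFactors.mpr hn
  have hlen : 0 < (n.primeFactors.sort (· ≤ ·)).length := by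
    rw [Finset.length_sort]; exact Finset.card_pos.mpr hne
  have hlen' : 0 < (n.primeFactors.sort (· ≤ ·)).reverse.length := by simpa using hlen
  have hPk : Pk 1 n = n.primeFactors.max' hne := by
    rw [Pk, List.getD_eq_getElem _ _ hlen', List.getElem_reverse]
    simp only [Nat.sub_zero]
    exact Finset.sorted_last_eq_max'_aux _ (by omega) hne
  rw [hPk]
  exact ⟨Finset.max'_mem _ _, fun q hq => Finset.le_max' _ q hq⟩

lemma S_mul_le_s17 (r t Q : ℕ) (A : Finset ℕ) (hA : ∀ q ∈ A, q.Prime) (hQ : Q.Prime)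
    (hQA : Q ∉ A) (ht : t ≠ 0) :
    S r ((∏ q ∈ A, q) * Q * t) ≤ (∏ q ∈ A, (q - r)) * (Q - r) * t := by
  set d := ∏ q ∈ A, q with hd
  have hd0 : d ≠ 0 := Finset.prod_ne_zero_iff.mpr fun q hq => (hA q hq).ne_zero
  set m := d * Q * t with hm
  have hm0 : m ≠ 0 := by
    simp only [hm, Nat.mul_ne_zero_iff]
    exact ⟨⟨hd0, hQ.ne_zero⟩, ht⟩
  have hB : m.primeFactors = (A ∪ {Q}) ∪ t.primeFactors := by
    rw [hm, Nat.primeFactors_mul (Nat.mul_ne_zero hd0 hQ.ne_zero) ht,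
      Nat.primeFactors_mul hd0 hQ.ne_zero, Nat.primeFactors_prod hA, hQ.primeFactors]
  have hv : ∀ p : ℕ, m.factorization p =
      (if p ∈ A then 1 else 0) + (if p = Q then 1 else 0) + t.factorization p := by
    intro p
    rw [hm, Nat.factorization_mul (Nat.mul_ne_zero hd0 hQ.ne_zero) ht,
      Nat.factorization_mul hd0 hQ.ne_zero]
    simp only [Finsupp.add_apply]
    congr 2
    · rw [hd, Nat.factorization_prod fun q hq => (hA q hq).ne_zero]
      rw [Finsupp.finset_sum_apply]
      rw [Finset.sum_congr rfl fun q hq => by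
        rw [(hA q hq).factorization, Finsupp.single_apply]]
      simp [Finset.sum_ite_eq']
    · rw [hQ.factorization, Finsupp.single_apply]
      simp [eq_comm]
  have hstep : S r m ≤ ∏ p ∈ m.primeFactors,
      ((p - r) ^ (if p ∈ A then 1 else 0) * (p - r) ^ (if p = Q then 1 else 0) *
        p ^ t.factorization p) := by
    refine Finset.prod_le_prod' fun p hp => ?_
    have hpprime : p.Prime := Nat.prime_of_mem_primeFactors hp
    have hvp := hv p
    by_cases hpA : p ∈ A
    · have hpQ : p ≠ Q := fun e => hQA (e ▸ hpA)
      simp only [hpA, if_true, hpQ, if_false] at hvp ⊢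
      rw [hvp]
      simp only [pow_one, pow_zero, mul_one]
      have : 1 + 0 + t.factorization p - 1 = t.factorization p := by omega
      rw [this]
      rw [mul_comm]
    · by_cases hpQ : p = Q
      · subst hpQ
        simp only [hpA, if_false, if_true] at hvp ⊢
        rw [hvp]
        simp only [pow_one, pow_zero, one_mul]
        have : 0 + 1 + t.factorization p - 1 = t.factorization p := by omega
        rw [this, mul_comm]
      · simp only [hpA, if_false, hpQ] at hvp ⊢
        have hv1 : t.factorization p ≠ 0 := by
          have : m.factorization p ≠ 0 := by
            rwa [← Finsupp.mem_support_iff, Nat.support_factorization]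
          omega
        rw [hvp]
        simp only [pow_zero, one_mul]
        have h1 : 0 + 0 + t.factorization p - 1 = t.factorization p - 1 := by omega
        rw [h1]
        calc p ^ (t.factorization p - 1) * (p - r) ≤ p ^ (t.factorization p - 1) * p := by
              exact Nat.mul_le_mul_left _ (Nat.sub_le p r)
          _ = p ^ t.factorization p := by
              rw [← pow_succ]
              congr 1
              omega
  refine hstep.trans (le_of_eq ?_)
  rw [Finset.prod_mul_distrib, Finset.prod_mul_distrib]
  congr 1
  · congr 1
    · rw [Finset.prod_congr rfl fun p _ => by
        rw [pow_ite, pow_one, pow_zero]]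
      rw [Finset.prod_ite_mem, Finset.inter_comm,
        Finset.inter_eq_left.mpr (by rw [hB]; exact Finset.subset_union_left.trans Finset.subset_union_left)]
    · rw [Finset.prod_congr rfl fun p _ => by
        rw [pow_ite, pow_one, pow_zero]]
      rw [Finset.prod_ite_eq']
      have hQB : Q ∈ m.primeFactors := by
        rw [hB]
        exact Finset.mem_union_left _ (Finset.mem_union_right _ (Finset.mem_singleton_self Q))
      simp [hQB]
  · have hsub : t.primeFactors ⊆ m.primeFactors := by
      rw [hB]; exact Finset.subset_union_right
    rw [← Finset.prod_subset hsub (fun p _ hp => by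
      have : t.factorization p = 0 := by
        rw [← Finsupp.notMem_support_iff, Nat.support_factorization]; exact hp
      simp [this])]
    conv_rhs => rw [← Nat.factorization_prod_pow_eq_self ht]
    rw [Finsupp.prod, Nat.support_factorization]

theorem stmt17 (r n : ℕ) (hr : 0 < r) (hn : 1 < n) (hB : 0 < S r n)
    (h : SST r n) :
    ((Pk 1 n : ℝ) ^ (n.factorization (Pk 1 n) - 1) <
      4 * ((J (primorial r) : ℝ) / r) * (Pk 1 n : ℝ) ^ 2) ∧
    ((Pk 1 n) ^ 4 ∣ n → (Pk 1 n : ℝ) < 4 * (J (primorial r) : ℝ) / r) := by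
  have hn0 : n ≠ 0 := by omega
  obtain ⟨hPmem, hPmax⟩ := Pk1_mem n hn
  set P := Pk 1 n with hPdef
  have hPprime : P.Prime := Nat.prime_of_mem_primeFactors hPmem
  have hrP : r < P := primes_gt_of_S_pos r n hB P hPmem
  set A := n.primeFactors with hAdef
  set R' := ∏ q ∈ A, q ^ (n.factorization q - 1) with hR'
  set C := ∏ q ∈ A, (q - r) with hCdef
  set d := ∏ q ∈ A, q with hdd
  have hApr : ∀ q ∈ A, q.Prime := fun q hq => Nat.prime_of_mem_primeFactors hq
  have hd0 : 0 < d := Finset.prod_pos fun q hq => (hApr q hq).pos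
  have hC0 : 0 < C := Finset.prod_pos fun q hq => by
    have := primes_gt_of_S_pos r n hB q hq; omega
  have hR'0 : 0 < R' :=
    Finset.prod_pos fun q hq => Nat.pow_pos (hApr q hq).pos
  obtain ⟨Q, hQp, hPQ, hQ2P⟩ := Nat.exists_prime_lt_and_le_two_mul P hPprime.ne_zero
  have hQA : Q ∉ A := fun hmem => absurd (hPmax Q hmem) (by omega)
  have hrQ : r < Q := by omega
  set N := primorial r with hNdef
  have hN0 : 0 < N := primorial_pos r
  obtain ⟨D, hDdef⟩ : ∃ D, R'/Q = D := ⟨_, rfl⟩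
  obtain ⟨t, htmem, htcop⟩ := J_spec N hN0 (D + 1)
  rw [Finset.mem_Ico] at htmem
  have ht0 : t ≠ 0 := by omega
  have htlow : D < t := by omega
  have hthigh : t ≤ D + J N := by omega
  have htprimes : ∀ p ∈ t.primeFactors, r < p := by
    intro q hq
    have hqp : q.Prime := Nat.prime_of_mem_primeFactors hq
    by_contra hle
    push_neg at hle
    have hdvdN : q ∣ N := by
      rw [hNdef, primorial]
      exact Finset.dvd_prod_of_mem _
        (Finset.mem_filter.mpr ⟨Finset.mem_range.mpr (by omega), hqp⟩)
    have hg : q ∣ Nat.gcd t N := Nat.dvd_gcd (Nat.dvd_of_mem_primeFactors hq) hdvdN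
    rw [htcop.gcd_eq_one] at hg
    have := Nat.le_of_dvd one_pos hg
    have := hqp.two_le
    omega
  set m := d * Q * t with hmdef
  have hnm : n < m := by
    have hn_eq : n = R' * d := n_eq_R_mul_rad n hn0
    have hRt : R' < t * Q := (Nat.div_lt_iff_lt_mul hQp.pos).mp (by rw [hDdef]; exact htlow)
    calc n = R' * d := hn_eq
      _ < (t * Q) * d := mul_lt_mul_of_pos_right hRt hd0
      _ = m := by rw [hmdef]; ring
  have hBm : m.primeFactors = (A ∪ {Q}) ∪ t.primeFactors := by
    rw [hmdef, hdd, Nat.primeFactors_mul (Nat.mul_ne_zero hd0.ne' hQp.ne_zero) ht0,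
      Nat.primeFactors_mul hd0.ne' hQp.ne_zero, Nat.primeFactors_prod hApr, hQp.primeFactors]
  have hSm_pos : 0 < S r m := by
    apply S_pos_of_s17
    intro q hq
    rw [hBm] at hq
    rcases Finset.mem_union.mp hq with hq' | hq'
    · rcases Finset.mem_union.mp hq' with hq'' | hq''
      · exact primes_gt_of_S_pos r n hB q hq''
      · rw [Finset.mem_singleton] at hq''
        omega
    · exact htprimes q hq'
  have hkey : S r m ≤ C * (Q - r) * t := by
    rw [hmdef, hdd]
    exact S_mul_le_s17 r t Q A hApr hQp hQA ht0
  have hlt : S r n < S r m := h.2 m hnm hSm_pos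
  have hSn : S r n = R' * C := S_eq r n
  have hmain1 : R' * C < C * (Q - r) * t := by
    rw [← hSn]; exact lt_of_lt_of_le hlt hkey
  have hmain2 : R' < (Q - r) * t := by
    have h' : C * R' < C * ((Q - r) * t) := by
      calc C * R' = R' * C := by ring
        _ < C * (Q - r) * t := hmain1
        _ = C * ((Q - r) * t) := by ring
    exact lt_of_mul_lt_mul_left h' (Nat.zero_le C)
  have h3 : R' < (Q - r) * (D + J N) :=
    lt_of_lt_of_le hmain2 (Nat.mul_le_mul_left _ hthigh)
  have h4 : R' * Q < (Q - r) * R' + (Q - r) * (J N * Q) := by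
    have h4a : R' * Q < ((Q - r) * (D + J N)) * Q :=
      mul_lt_mul_of_pos_right h3 hQp.pos
    have hdm : D * Q ≤ R' := by rw [← hDdef]; exact Nat.div_mul_le_self R' Q
    calc R' * Q < ((Q - r) * (D + J N)) * Q := h4a
      _ = (Q - r) * (D * Q) + (Q - r) * (J N * Q) := by ring
      _ ≤ (Q - r) * R' + (Q - r) * (J N * Q) :=
          Nat.add_le_add_right (Nat.mul_le_mul_left _ hdm) _
  have hsplit : R' * Q = (Q - r) * R' + r * R' := by
    have hs : (Q - r) + r = Q := Nat.sub_add_cancel (by omega)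
    calc R' * Q = ((Q - r) + r) * R' := by rw [hs]; ring
      _ = (Q - r) * R' + r * R' := by ring
  have h5 : r * R' < (Q - r) * (J N * Q) := by
    rw [hsplit] at h4
    exact lt_of_add_lt_add_left h4
  have h6 : r * R' < 4 * J N * P ^ 2 := by
    calc r * R' < (Q - r) * (J N * Q) := h5
      _ ≤ (2 * P) * (J N * (2 * P)) :=
          Nat.mul_le_mul (by omega) (Nat.mul_le_mul_left _ hQ2P)
      _ = 4 * J N * P ^ 2 := by ring
  have hPR : P ^ (n.factorization P - 1) ≤ R' :=
    Nat.le_of_dvd hR'0 (Finset.dvd_prod_of_mem _ hPmem)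
  have hr0 : (0:ℝ) < r := by exact_mod_cast hr
  constructor
  · have h7 : r * P ^ (n.factorization P - 1) < 4 * J N * P ^ 2 :=
      lt_of_le_of_lt (Nat.mul_le_mul_left r hPR) h6
    have h8 : (r:ℝ) * (P:ℝ) ^ (n.factorization P - 1) < 4 * (J N : ℝ) * (P:ℝ) ^ 2 := by
      exact_mod_cast h7
    rw [show (4:ℝ) * ((J N : ℝ)/r) * (P:ℝ) ^ 2 = (4 * (J N : ℝ) * (P:ℝ) ^ 2)/r by ring,
      lt_div_iff₀ hr0]
    linarith
  · intro hdvd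
    have heta : 4 ≤ n.factorization P :=
      (Nat.Prime.pow_dvd_iff_le_factorization hPprime hn0).mp hdvd
    have h9 : P ^ 3 ≤ P ^ (n.factorization P - 1) :=
      Nat.pow_le_pow_right hPprime.pos (by omega)
    have h10 : r * P ^ 3 < 4 * J N * P ^ 2 :=
      lt_of_le_of_lt (Nat.mul_le_mul_left r (h9.trans hPR)) h6
    have h11 : (r * P) * P ^ 2 < (4 * J N) * P ^ 2 := by
      calc (r * P) * P ^ 2 = r * P ^ 3 := by ring
        _ < 4 * J N * P ^ 2 := h10
        _ = (4 * J N) * P ^ 2 := by ring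
    have h12 : r * P < 4 * J N := Nat.lt_of_mul_lt_mul_right h11
    rw [lt_div_iff₀ hr0]
    have : ((r:ℝ) * P) < 4 * (J N : ℝ) := by exact_mod_cast h12
    linarith
end

section
/- Let r be a positive integer. If n ∈ B_r and t > b(r) is the unique integer with ∏_{i=b(r)+1}^{t} p_i ≤ n < ∏_{i=b(r)+1}^{t+1} p_i, then ω(n) ≤ t − b(r) and S_r(n) ≥ ∏_{i=b(r)+1}^{t} (p_i − r). -/
-- auxiliary

lemma nth_prime_pos (j : ℕ) : 0 < Nat.nth Nat.Prime j :=
  (Nat.nth_mem_of_infinite Nat.infinite_setOf_prime j).pos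

lemma key (r : ℕ) : ∀ k (Q : Finset ℕ), Q.card = k → (∀ q ∈ Q, q.Prime ∧ r < q) →
    (∏ j ∈ Finset.range k, Nat.nth Nat.Prime (Nat.count Nat.Prime (r+1) + j)) ≤ (∏ q ∈ Q, q) ∧
    (∏ j ∈ Finset.range k, (Nat.nth Nat.Prime (Nat.count Nat.Prime (r+1) + j) - r)) * ∏ q ∈ Q, q ≤
    (∏ j ∈ Finset.range k, Nat.nth Nat.Prime (Nat.count Nat.Prime (r+1) + j)) * ∏ q ∈ Q, (q - r) := by
  intro k
  induction k with
  | zero => intro Q hQ _; rw [Finset.card_eq_zero] at hQ; subst hQ; simp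
  | succ k ih =>
    intro Q hQ hprime
    have hne : Q.Nonempty := Finset.card_pos.mp (by omega)
    set M := Q.max' hne with hM
    have hMmem : M ∈ Q := Q.max'_mem hne
    have hQ' : (Q.erase M).card = k := by
      rw [Finset.card_erase_of_mem hMmem, hQ]
      omega
    have hprime' : ∀ q ∈ Q.erase M, q.Prime ∧ r < q := fun q hq =>
      hprime q (Finset.mem_of_mem_erase hq)
    obtain ⟨ih1, ih2⟩ := ih (Q.erase M) hQ' hprime'
    set c := Nat.count Nat.Prime (r+1) with hc
    -- nth Prime (c + k) ≤ M
    have hsub : (Finset.range (r+1)).filter Nat.Prime ∪ Q.erase M ⊆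
        (Finset.range M).filter Nat.Prime := by
      intro x hx
      rcases Finset.mem_union.mp hx with hx | hx
      · obtain ⟨hx1, hx2⟩ := Finset.mem_filter.mp hx
        refine Finset.mem_filter.mpr ⟨Finset.mem_range.mpr ?_, hx2⟩
        have := (hprime M hMmem).2
        have := Finset.mem_range.mp hx1
        omega
      · obtain ⟨hx1, hx2⟩ := Finset.mem_erase.mp hx
        refine Finset.mem_filter.mpr ⟨Finset.mem_range.mpr ?_, (hprime x hx2).1⟩
        have := Q.le_max' x hx2
        omega
    have hdisj : Disjoint ((Finset.range (r+1)).filter Nat.Prime) (Q.erase M) := by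
      rw [Finset.disjoint_left]
      intro x hx1 hx2
      have h1 := Finset.mem_range.mp (Finset.mem_filter.mp hx1).1
      have h2 := (hprime x (Finset.mem_of_mem_erase hx2)).2
      omega
    have hcard : c + k ≤ Nat.count Nat.Prime M := by
      have := Finset.card_le_card hsub
      rw [Finset.card_union_of_disjoint hdisj, hQ'] at this
      rw [hc, Nat.count_eq_card_filter_range, Nat.count_eq_card_filter_range]
      exact this
    have hPM : Nat.nth Nat.Prime (c + k) ≤ M := by
      calc Nat.nth Nat.Prime (c + k) ≤ Nat.nth Nat.Prime (Nat.count Nat.Prime M) :=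
            (Nat.nth_le_nth Nat.infinite_setOf_prime).mpr hcard
        _ = M := Nat.nth_count (hprime M hMmem).1
    set P := Nat.nth Nat.Prime (c + k) with hP
    have hrP : r < P := by
      have h0 : Nat.nth Nat.Prime c ≤ P :=
        (Nat.nth_le_nth Nat.infinite_setOf_prime).mpr (Nat.le_add_right c k)
      by_contra h
      push_neg at h
      have hp : Nat.Prime (Nat.nth Nat.Prime c) := Nat.nth_mem_of_infinite Nat.infinite_setOf_prime c
      have : Nat.nth Nat.Prime c < r + 1 := by omega
      have hlt := Nat.count_strict_mono hp this
      rw [Nat.count_nth_of_infinite Nat.infinite_setOf_prime] at hlt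
      omega
    have hrM : r < M := (hprime M hMmem).2
    -- arithmetic: (P - r) * M ≤ P * (M - r)
    have harith : (P - r) * M ≤ P * (M - r) := by
      have e1 : (P - r) * M + r * M = P * M := by
        rw [← Nat.add_mul]; congr 1; omega
      have e2 : P * (M - r) + P * r = P * M := by
        rw [← Nat.mul_add]; congr 1; omega
      have : P * r ≤ r * M := by
        rw [Nat.mul_comm P r]; exact Nat.mul_le_mul_left r hPM
      omega
    have hQsplit : ∏ q ∈ Q, q = (∏ q ∈ Q.erase M, q) * M := by
      rw [← Finset.mul_prod_erase Q _ hMmem, Nat.mul_comm]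
    have hQsplit' : ∏ q ∈ Q, (q - r) = (∏ q ∈ Q.erase M, (q - r)) * (M - r) := by
      rw [← Finset.mul_prod_erase Q _ hMmem, Nat.mul_comm]
    constructor
    · rw [Finset.prod_range_succ, hQsplit]
      exact Nat.mul_le_mul ih1 hPM
    · rw [Finset.prod_range_succ, Finset.prod_range_succ, hQsplit, hQsplit']
      calc (∏ j ∈ Finset.range k, (Nat.nth Nat.Prime (c + j) - r)) * (P - r) *
            ((∏ q ∈ Q.erase M, q) * M)
          = ((∏ j ∈ Finset.range k, (Nat.nth Nat.Prime (c + j) - r)) * ∏ q ∈ Q.erase M, q) *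
            ((P - r) * M) := by ring
        _ ≤ ((∏ j ∈ Finset.range k, Nat.nth Nat.Prime (c + j)) * ∏ q ∈ Q.erase M, (q - r)) *
            (P * (M - r)) := Nat.mul_le_mul ih2 harith
        _ = (∏ j ∈ Finset.range k, Nat.nth Nat.Prime (c + j)) * P *
            ((∏ q ∈ Q.erase M, (q - r)) * (M - r)) := by ring

theorem stmt19 (r n t : ℕ) (hr : 0 < r) (hn : 0 < S r n) (ht : b r < t)
    (h1 : ∏ i ∈ Finset.Icc (b r + 1) t, p i ≤ n)
    (h2 : n < ∏ i ∈ Finset.Icc (b r + 1) (t + 1), p i) :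
    n.primeFactors.card ≤ t - b r ∧
    ∏ i ∈ Finset.Icc (b r + 1) t, (p i - r) ≤ S r n := by
  have hbc : b r = Nat.count Nat.Prime (r + 1) := by
    rw [b, Nat.count_eq_card_filter_range]
  set c := Nat.count Nat.Prime (r + 1) with hcdef
  -- reindex products
  have reidx : ∀ (u : ℕ) (f : ℕ → ℕ), ∏ i ∈ Finset.Icc (b r + 1) u, f i =
      ∏ j ∈ Finset.range (u - c), f (c + 1 + j) := by
    intro u f
    rw [← Finset.Ico_add_one_right_eq_Icc, Finset.prod_Ico_eq_prod_range, hbc, Nat.add_sub_add_right]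
  have hp1 : ∏ i ∈ Finset.Icc (b r + 1) t, p i =
      ∏ j ∈ Finset.range (t - c), Nat.nth Nat.Prime (c + j) := by
    rw [reidx]; apply Finset.prod_congr rfl; intro j _; rw [p]; congr 1; omega
  have hp2 : ∏ i ∈ Finset.Icc (b r + 1) (t+1), p i =
      ∏ j ∈ Finset.range (t + 1 - c), Nat.nth Nat.Prime (c + j) := by
    rw [reidx]; apply Finset.prod_congr rfl; intro j _; rw [p]; congr 1; omega
  have hp3 : ∏ i ∈ Finset.Icc (b r + 1) t, (p i - r) =
      ∏ j ∈ Finset.range (t - c), (Nat.nth Nat.Prime (c + j) - r) := by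
    rw [reidx]; apply Finset.prod_congr rfl; intro j _; rw [p]; congr 2; omega
  have hct : c < t := by rw [← hbc]; exact ht
  -- n ≠ 0
  have hn0 : n ≠ 0 := by
    rintro rfl
    rw [hp1] at h1
    have : 0 < ∏ j ∈ Finset.range (t - c), Nat.nth Nat.Prime (c + j) :=
      Finset.prod_pos fun j _ => nth_prime_pos _
    omega
  -- all prime factors > r
  have hprime : ∀ q ∈ n.primeFactors, q.Prime ∧ r < q := by
    intro q hq
    refine ⟨Nat.prime_of_mem_primeFactors hq, ?_⟩
    by_contra h
    push_neg at h
    have : q - r = 0 := by omega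
    have : S r n = 0 := by
      apply Finset.prod_eq_zero hq
      rw [this, Nat.mul_zero]
    omega
  set Q := n.primeFactors with hQdef
  set k := Q.card with hk
  obtain ⟨key1, key2⟩ := key r k Q rfl hprime
  rw [← hcdef] at key1 key2
  have hQpos : 0 < ∏ q ∈ Q, q := Finset.prod_pos fun q hq => (hprime q hq).1.pos
  have hQn : ∏ q ∈ Q, q ≤ n := Nat.le_of_dvd (Nat.pos_of_ne_zero hn0) (Nat.prod_primeFactors_dvd n)
  -- Part 1
  have part1 : k ≤ t - c := by
    by_contra h
    push_neg at h
    have hle : t + 1 - c ≤ k := by omega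
    have : ∏ j ∈ Finset.range (t + 1 - c), Nat.nth Nat.Prime (c + j) ≤
        ∏ j ∈ Finset.range k, Nat.nth Nat.Prime (c + j) := by
      apply Finset.prod_le_prod_of_subset_of_one_le'
      · exact Finset.range_subset_range.mpr hle
      · intro j _ _; exact nth_prime_pos _
    rw [hp2] at h2
    omega
  refine ⟨by rw [hbc]; exact part1, ?_⟩
  -- Part 2
  set A := ∏ j ∈ Finset.range (t - c), Nat.nth Nat.Prime (c + j) with hA
  set Ar := ∏ j ∈ Finset.range (t - c), (Nat.nth Nat.Prime (c + j) - r) with hAr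
  have hsplitA : A = (∏ j ∈ Finset.range k, Nat.nth Nat.Prime (c + j)) *
      ∏ j ∈ Finset.range (t - c - k), Nat.nth Nat.Prime (c + (k + j)) := by
    have e : t - c = k + (t - c - k) := by omega
    rw [hA, e, Finset.prod_range_add, Nat.add_sub_cancel_left]
  have hsplitAr : Ar = (∏ j ∈ Finset.range k, (Nat.nth Nat.Prime (c + j) - r)) *
      ∏ j ∈ Finset.range (t - c - k), (Nat.nth Nat.Prime (c + (k + j)) - r) := by
    have e : t - c = k + (t - c - k) := by omega
    rw [hAr, e, Finset.prod_range_add, Nat.add_sub_cancel_left]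
  have hB : ∏ j ∈ Finset.range (t - c - k), (Nat.nth Nat.Prime (c + (k + j)) - r) ≤
      ∏ j ∈ Finset.range (t - c - k), Nat.nth Nat.Prime (c + (k + j)) :=
    Finset.prod_le_prod (fun _ _ => Nat.zero_le _) (fun j _ => Nat.sub_le _ _)
  have hmain : Ar * ∏ q ∈ Q, q ≤ A * ∏ q ∈ Q, (q - r) := by
    rw [hsplitA, hsplitAr]
    calc (∏ j ∈ Finset.range k, (Nat.nth Nat.Prime (c + j) - r)) *
          (∏ j ∈ Finset.range (t - c - k), (Nat.nth Nat.Prime (c + (k + j)) - r)) * ∏ q ∈ Q, q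
        = ((∏ j ∈ Finset.range k, (Nat.nth Nat.Prime (c + j) - r)) * ∏ q ∈ Q, q) *
          (∏ j ∈ Finset.range (t - c - k), (Nat.nth Nat.Prime (c + (k + j)) - r)) := by ring
      _ ≤ ((∏ j ∈ Finset.range k, Nat.nth Nat.Prime (c + j)) * ∏ q ∈ Q, (q - r)) *
          (∏ j ∈ Finset.range (t - c - k), Nat.nth Nat.Prime (c + (k + j))) :=
          Nat.mul_le_mul key2 hB
      _ = (∏ j ∈ Finset.range k, Nat.nth Nat.Prime (c + j)) *
          (∏ j ∈ Finset.range (t - c - k), Nat.nth Nat.Prime (c + (k + j))) *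
          ∏ q ∈ Q, (q - r) := by ring
  -- S r n * ∏ q = n * ∏ (q - r)
  have hSid : S r n * ∏ q ∈ Q, q = n * ∏ q ∈ Q, (q - r) := by
    have hfact : ∏ q ∈ Q, q ^ n.factorization q = n := by
      conv_rhs => rw [← Nat.factorization_prod_pow_eq_self hn0]
      rfl
    have step : ∀ q ∈ Q, q ^ (n.factorization q - 1) * (q - r) * q
        = q ^ n.factorization q * (q - r) := by
      intro q hq
      have he : 1 ≤ n.factorization q := by
        have h1 : q ∈ (n.factorization).support := by
          rw [Nat.support_factorization]; exact hq
        have := Finsupp.mem_support_iff.mp h1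
        omega
      have hpow : q ^ (n.factorization q - 1) * q = q ^ n.factorization q := by
        rw [← pow_succ]; congr 1; omega
      calc q ^ (n.factorization q - 1) * (q - r) * q
          = q ^ (n.factorization q - 1) * q * (q - r) := by ring
        _ = q ^ n.factorization q * (q - r) := by rw [hpow]
    calc S r n * ∏ q ∈ Q, q
        = ∏ q ∈ Q, (q ^ (n.factorization q - 1) * (q - r) * q) := by
          rw [S, ← Finset.prod_mul_distrib]
      _ = ∏ q ∈ Q, (q ^ n.factorization q * (q - r)) := Finset.prod_congr rfl step
      _ = (∏ q ∈ Q, q ^ n.factorization q) * ∏ q ∈ Q, (q - r) := Finset.prod_mul_distrib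
      _ = n * ∏ q ∈ Q, (q - r) := by rw [hfact]
  rw [hp3]
  have hchain : Ar * ∏ q ∈ Q, q ≤ S r n * ∏ q ∈ Q, q := by
    rw [hSid]
    calc Ar * ∏ q ∈ Q, q ≤ A * ∏ q ∈ Q, (q - r) := hmain
      _ ≤ n * ∏ q ∈ Q, (q - r) := by
          apply Nat.mul_le_mul_right
          rw [← hp1]; exact h1
  exact Nat.le_of_mul_le_mul_right hchain hQpos
end
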